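/- arXiv:1901.07784 — 2 statements merged into one kernel-verified Lean document; each statement's English description precedes it below -/
import Mathlib

section
/- Let m ≥ 3 and let f be an automorphism of the Hamming graph H(n,m) fixing a vertex x and fixing every neighbor of x pointwise. Then f is the identity automorphism. -/
/-- The Hamming graph `H(n,m)`: vertices are `n`-tuples over `Fin m`,
adjacent iff they differ in exactly one coordinate. -/
def hammingGraph (n m : ℕ) : SimpleGraph (Fin n → Fin m) where
  Adj x y := hammingDist x y = 1
  symm := ⟨by intro x y h; rwa [hammingDist_comm]⟩
  loopless := ⟨by intro x h; simp [hammingDist_self] at h⟩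

private lemma hg_filter_update {n m : ℕ} (x v : Fin n → Fin m) (i : Fin n) :
    Finset.filter (fun k => x k ≠ Function.update v i (x i) k) Finset.univ
      = (Finset.filter (fun k => x k ≠ v k) Finset.univ).erase i := by
  ext k
  rcases eq_or_ne k i with h | h <;> simp [Function.update_apply, h]

private lemma hg_dist_update {n m : ℕ} (x v : Fin n → Fin m) (i : Fin n) :
    hammingDist x (Function.update v i (x i))
      = ((Finset.filter (fun k => x k ≠ v k) Finset.univ).erase i).card := by
  rw [hammingDist, hg_filter_update]

private lemma hg_adj_update {n m : ℕ} (v : Fin n → Fin m) (i : Fin n) (a : Fin m)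
    (h : a ≠ v i) : hammingDist v (Function.update v i a) = 1 := by
  rw [hammingDist]
  have : Finset.filter (fun k => v k ≠ Function.update v i a k) Finset.univ = {i} := by
    ext k
    rcases eq_or_ne k i with hk | hk <;> simp [Function.update_apply, hk, Ne.symm h]
  rw [this, Finset.card_singleton]

private lemma hg_exists_of_dist_one {n m : ℕ} {u w : Fin n → Fin m}
    (h : hammingDist u w = 1) :
    ∃ a, u a ≠ w a ∧ ∀ k, k ≠ a → u k = w k := by
  rw [hammingDist] at h
  obtain ⟨a, ha⟩ := Finset.card_eq_one.mp h
  refine ⟨a, ?_, ?_⟩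
  · have : a ∈ ({a} : Finset (Fin n)) := Finset.mem_singleton_self a
    rw [← ha] at this
    simpa using this
  · intro k hk
    by_contra hne
    have : k ∈ Finset.filter (fun k => u k ≠ w k) Finset.univ := by simp [hne]
    rw [ha, Finset.mem_singleton] at this
    exact hk this

private lemma hg_common_neighbor {n m : ℕ} (x v u : Fin n → Fin m) (i j : Fin n)
    (hij : i ≠ j) (hi : x i ≠ v i) (hj : x j ≠ v j)
    (h1 : hammingDist u (Function.update v i (x i)) = 1)
    (h2 : hammingDist u (Function.update v j (x j)) = 1) :
    u = v ∨ u = Function.update (Function.update v i (x i)) j (x j) := by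
  obtain ⟨a, ha, ha'⟩ := hg_exists_of_dist_one h1
  obtain ⟨b, hb, hb'⟩ := hg_exists_of_dist_one h2
  -- u agrees with v off {a} ∪ {i}, etc.
  have hab : a = i ∨ a = j := by
    by_contra hcon
    push_neg at hcon
    obtain ⟨hai, haj⟩ := hcon
    have hwa : Function.update v i (x i) a = v a := Function.update_of_ne hai _ _
    have hwa2 : Function.update v j (x j) a = v a := Function.update_of_ne haj _ _
    have hba : b = a := by
      by_contra hba
      exact ha (by rw [hwa, ← hwa2, hb' a (fun h => hba h.symm)])
    have hui : u i = Function.update v i (x i) i := ha' i (fun h => hai (h ▸ rfl))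
    have hui2 : u i = Function.update v j (x j) i := by
      rw [hb' i]
      rw [hba]
      exact fun h => hai (h ▸ rfl)
    rw [Function.update_self] at hui
    rw [Function.update_of_ne hij] at hui2
    exact hi (hui ▸ hui2)
  have hoff : ∀ k, k ≠ i → k ≠ j → u k = v k := by
    intro k hki hkj
    have hka : k ≠ a := by rcases hab with h | h <;> rw [h] <;> assumption
    rw [ha' k hka, Function.update_of_ne hki]
  rcases hab with hai | haj
  · -- a = i : u i ≠ x i
    rw [hai, Function.update_self] at ha
    have huj : u j = v j := by
      have h' : u j = Function.update v i (x i) j := ha' j (by rw [hai]; exact Ne.symm hij)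
      rwa [Function.update_of_ne (Ne.symm hij)] at h'
    have hbj : b = j := by
      by_contra hbj
      have h' : u j = Function.update v j (x j) j := hb' j (fun h => hbj h.symm)
      rw [Function.update_self] at h'
      exact hj (h'.symm.trans huj)
    have hui : u i = v i := by
      have h' : u i = Function.update v j (x j) i := hb' i (by rw [hbj]; exact hij)
      rwa [Function.update_of_ne hij] at h'
    left
    funext k
    rcases eq_or_ne k i with rfl | hki
    · exact hui
    rcases eq_or_ne k j with rfl | hkj
    · exact huj
    · exact hoff k hki hkj
  · -- a = j : u j ≠ v j, u i = x i
    have hui : u i = x i := by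
      have h' : u i = Function.update v i (x i) i := ha' i (by rw [haj]; exact hij)
      rwa [Function.update_self] at h'
    have hbi : b = i := by
      by_contra hbi
      have h' : u i = Function.update v j (x j) i := hb' i (fun h => hbi h.symm)
      rw [Function.update_of_ne hij] at h'
      exact hi (hui.symm.trans h')
    have hujx : u j = x j := by
      have h' : u j = Function.update v j (x j) j := hb' j (by rw [hbi]; exact Ne.symm hij)
      rwa [Function.update_self] at h'
    right
    funext k
    rcases eq_or_ne k j with rfl | hkj
    · rw [Function.update_self]; exact hujx
    rcases eq_or_ne k i with rfl | hki
    · rw [Function.update_of_ne hkj, Function.update_self]; exact hui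
    · rw [Function.update_of_ne hkj, Function.update_of_ne hki]
      exact hoff k hki hkj

/-- For `m ≥ 3`, an automorphism of `H(n,m)` fixing a vertex `x` and all of
its neighbours is the identity. -/
theorem hammingGraph_rigid_stabilizer (n m : ℕ) (hm : 3 ≤ m)
    (f : hammingGraph n m ≃g hammingGraph n m) (x : Fin n → Fin m)
    (hx : f x = x) (hN : ∀ y ∈ (hammingGraph n m).neighborSet x, f y = y) :
    ∀ v : Fin n → Fin m, f v = v := by
  suffices H : ∀ d : ℕ, ∀ v : Fin n → Fin m, hammingDist x v = d → f v = v by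
    intro v; exact H _ v rfl
  intro d
  induction d using Nat.strong_induction_on with
  | _ d IH =>
    intro v hd
    match d, hd with
    | 0, hd =>
      have : x = v := eq_of_hammingDist_eq_zero hd
      rw [← this, hx]
    | 1, hd =>
      exact hN v hd
    | (d + 2), hd =>
      -- the disagreement set has at least 2 elements
      set S := Finset.filter (fun k => x k ≠ v k) Finset.univ with hS
      have hScard : S.card = d + 2 := hd
      have h2 : 1 < S.card := by omega
      obtain ⟨i, hiS, j, hjS, hij⟩ := Finset.one_lt_card.mp h2
      have hi : x i ≠ v i := (Finset.mem_filter.mp hiS).2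
      have hj : x j ≠ v j := (Finset.mem_filter.mp hjS).2
      set w1 := Function.update v i (x i) with hw1
      set w2 := Function.update v j (x j) with hw2
      set z := Function.update (Function.update v i (x i)) j (x j) with hz
      -- distances of w1, w2, z from x
      have hdw1 : hammingDist x w1 = d + 1 := by
        rw [hw1, hg_dist_update, ← hS, Finset.card_erase_of_mem hiS, hScard]; omega
      have hdw2 : hammingDist x w2 = d + 1 := by
        rw [hw2, hg_dist_update, ← hS, Finset.card_erase_of_mem hjS, hScard]; omega
      have hdz : hammingDist x z = d := by
        rw [hz, hg_dist_update, hg_filter_update, ← hS,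
          Finset.card_erase_of_mem (Finset.mem_erase.mpr ⟨Ne.symm hij, hjS⟩),
          Finset.card_erase_of_mem hiS, hScard]
        omega
      have hfw1 : f w1 = w1 := IH (d + 1) (by omega) w1 hdw1
      have hfw2 : f w2 = w2 := IH (d + 1) (by omega) w2 hdw2
      have hfz : f z = z := IH d (by omega) z hdz
      -- f v is adjacent to w1 and w2
      have hadj1 : (hammingGraph n m).Adj v w1 := hg_adj_update v i (x i) hi
      have hadj2 : (hammingGraph n m).Adj v w2 := hg_adj_update v j (x j) hj
      have hfadj1 : hammingDist (f v) w1 = 1 := by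
        have := f.map_adj_iff.mpr hadj1
        rwa [hfw1] at this
      have hfadj2 : hammingDist (f v) w2 = 1 := by
        have := f.map_adj_iff.mpr hadj2
        rwa [hfw2] at this
      rcases hg_common_neighbor x v (f v) i j hij hi hj hfadj1 hfadj2 with h | h
      · exact h
      · -- f v = z is impossible since f z = z, f injective, v ≠ z
        exfalso
        have hvz : v ≠ z := by
          intro hvz
          apply hi
          have h' := congrFun hvz i
          rw [hz, Function.update_of_ne hij, Function.update_self] at h'
          exact h'.symm
        have hfvz : f v = f z := by rw [h, hfz]
        exact hvz (f.toEquiv.injective hfvz)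
end

section
/- For n ≥ 2 and m ≥ 3, the automorphism group of the Hamming graph H(n,m) has order exactly (m!)^n · n!. -/
open Finset Function Equiv

namespace HammingAutAux

variable {n m : ℕ}

lemma adj_iff {x y : Fin n → Fin m} :
    (hammingGraph n m).Adj x y ↔ ∃ i, x i ≠ y i ∧ ∀ j, j ≠ i → x j = y j := by
  show hammingDist x y = 1 ↔ _
  rw [hammingDist, Finset.card_eq_one]
  constructor
  · rintro ⟨i, hi⟩
    have hmem : ∀ j, x j ≠ y j ↔ j ∈ ({i} : Finset (Fin n)) := by
      intro j
      rw [← hi]; simp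
    refine ⟨i, ?_, ?_⟩
    · rw [hmem]; simp
    · intro j hj
      by_contra h
      have := (hmem j).mp h
      simp at this; exact hj this
  · rintro ⟨i, h1, h2⟩
    refine ⟨i, ?_⟩
    ext j
    simp only [mem_filter, mem_univ, true_and, mem_singleton]
    constructor
    · intro h; by_contra hj; exact h (h2 j hj)
    · rintro rfl; exact h1

lemma adj_update {w : Fin n → Fin m} {p : Fin n} {a : Fin m} (h : w p ≠ a) :
    (hammingGraph n m).Adj w (update w p a) :=
  adj_iff.mpr ⟨p, by simpa using h, fun j hj => (update_of_ne hj a w).symm⟩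

lemma not_adj_two {v w : Fin n → Fin m} {p q : Fin n} (hpq : p ≠ q)
    (hp : v p ≠ w p) (hq : v q ≠ w q) : ¬ (hammingGraph n m).Adj v w := by
  intro h
  obtain ⟨k, _, hk2⟩ := adj_iff.mp h
  rcases eq_or_ne k p with rfl | h'
  · exact hq (hk2 q (Ne.symm hpq))
  · exact hp (hk2 p (Ne.symm h'))

lemma dist_le_one_of_agree {x y : Fin n → Fin m} (k : Fin n)
    (h : ∀ j, j ≠ k → x j = y j) : hammingDist x y ≤ 1 := by
  rw [hammingDist]
  refine le_trans (Finset.card_le_card (fun j hj => ?_)) (by simp : ({k} : Finset (Fin n)).card ≤ 1)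
  simp only [mem_filter, mem_univ, true_and] at hj
  simp only [mem_singleton]
  by_contra hjk
  exact hj (h j hjk)

lemma adj_of_ne_of_agree {x y : Fin n → Fin m} (k : Fin n)
    (hne : x ≠ y) (h : ∀ j, j ≠ k → x j = y j) : (hammingGraph n m).Adj x y := by
  have h1 := dist_le_one_of_agree k h
  have h2 := hammingDist_ne_zero.mpr hne
  show hammingDist x y = 1
  omega

/-- A pair at distance ≥ 2 with a common neighbour has at most two common neighbours. -/
lemma three_common {y z w₁ w₂ w₃ : Fin n → Fin m} (hyz : y ≠ z)
    (hnadj : ¬ (hammingGraph n m).Adj y z)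
    (h1y : (hammingGraph n m).Adj w₁ y) (h1z : (hammingGraph n m).Adj w₁ z)
    (h2y : (hammingGraph n m).Adj w₂ y) (h2z : (hammingGraph n m).Adj w₂ z)
    (h3y : (hammingGraph n m).Adj w₃ y) (h3z : (hammingGraph n m).Adj w₃ z) :
    w₁ = w₂ ∨ w₁ = w₃ ∨ w₂ = w₃ := by
  -- hammingDist y z = 2
  have hd : hammingDist y z = 2 := by
    have hle : hammingDist y z ≤ 2 := by
      have := hammingDist_triangle y w₁ z
      have e1 : hammingDist y w₁ = 1 := by rw [hammingDist_comm]; exact h1y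
      have e2 : hammingDist w₁ z = 1 := h1z
      omega
    have h0 := hammingDist_ne_zero.mpr hyz
    have h1 : hammingDist y z ≠ 1 := hnadj
    omega
  rw [hammingDist, Finset.card_eq_two] at hd
  obtain ⟨i, j, hij, hset⟩ := hd
  have hyi : y i ≠ z i := by
    have : i ∈ ({i, j} : Finset (Fin n)) := by simp
    rw [← hset] at this; simpa using this
  have hyj : y j ≠ z j := by
    have : j ∈ ({i, j} : Finset (Fin n)) := by simp
    rw [← hset] at this; simpa using this
  have hoff : ∀ k, k ≠ i → k ≠ j → y k = z k := by
    intro k hki hkj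
    by_contra h
    have : k ∈ ({i, j} : Finset (Fin n)) := by rw [← hset]; simpa using h
    simp at this; tauto
  -- each common neighbour is one of two vertices
  have key : ∀ w, (hammingGraph n m).Adj w y → (hammingGraph n m).Adj w z →
      w = update y i (z i) ∨ w = update y j (z j) := by
    intro w hwy hwz
    obtain ⟨k, hk1, hk2⟩ := adj_iff.mp hwy
    obtain ⟨l, hl1, hl2⟩ := adj_iff.mp hwz
    have hkij : k = i ∨ k = j := by
      by_contra h
      push_neg at h
      obtain ⟨hki, hkj⟩ := h
      have hwk : w k ≠ z k := by rw [← hoff k hki hkj]; exact hk1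
      have hlk : l = k := by
        by_contra h'
        exact hwk (hl2 k (Ne.symm h'))
      subst hlk
      have : w i = y i := hk2 i (Ne.symm hki)
      have h2 : w i = z i := hl2 i (Ne.symm hki)
      exact hyi (this ▸ h2)
    rcases hkij with rfl | rfl
    · left
      have hlj : l = j := by
        by_contra h'
        have : w j = y j := hk2 j (Ne.symm hij)
        have h2 : w j = z j := hl2 j (Ne.symm h')
        exact hyj (this ▸ h2)
      subst hlj
      have hwi : w k = z k := hl2 k hij
      funext c
      rcases eq_or_ne c k with rfl | hc
      · rw [update_self]; exact hwi
      · rw [update_of_ne hc]; exact hk2 c hc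
    · right
      have hli : l = i := by
        by_contra h'
        have : w i = y i := hk2 i hij
        have h2 : w i = z i := hl2 i (Ne.symm h')
        exact hyi (this ▸ h2)
      subst hli
      have hwj : w k = z k := hl2 k (Ne.symm hij)
      funext c
      rcases eq_or_ne c k with rfl | hc
      · rw [update_self]; exact hwj
      · rw [update_of_ne hc]; exact hk2 c hc
  rcases key w₁ h1y h1z with e1 | e1 <;> rcases key w₂ h2y h2z with e2 | e2 <;>
    rcases key w₃ h3y h3z with e3 | e3 <;> simp [e1, e2, e3]

end HammingAutAux

namespace HammingAutAux

lemma hammingDist_reindex (e : Fin n ≃ Fin n) (x y : Fin n → Fin m) :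
    hammingDist (fun j => x (e j)) (fun j => y (e j)) = hammingDist x y := by
  rw [hammingDist, hammingDist]
  apply Finset.card_bij' (fun j _ => e j) (fun i _ => e.symm i)
  · intro a ha; simpa using ha
  · intro a ha; simp only [mem_filter, mem_univ, true_and] at ha ⊢; simpa using ha
  · intro a _; simp
  · intro a _; simp

/-- The wreath-product automorphism of the Hamming graph. -/
def autOf (π : Fin n → Equiv.Perm (Fin m)) (σ : Equiv.Perm (Fin n)) :
    hammingGraph n m ≃g hammingGraph n m where
  toEquiv := (Equiv.arrowCongr σ (Equiv.refl (Fin m))).trans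
      (Equiv.piCongrRight fun j => π (σ.symm j))
  map_rel_iff' := by
    intro x y
    show hammingDist _ _ = 1 ↔ hammingDist x y = 1
    have h1 : hammingDist
        (fun j => π (σ.symm j) (x (σ.symm j))) (fun j => π (σ.symm j) (y (σ.symm j)))
        = hammingDist (fun j => x (σ.symm j)) (fun j => y (σ.symm j)) :=
      hammingDist_comp (fun j a => π (σ.symm j) a) (fun j => (π (σ.symm j)).injective)
    have h2 : hammingDist (fun j => x (σ.symm j)) (fun j => y (σ.symm j))
        = hammingDist x y := hammingDist_reindex σ.symm x y
    have : ∀ z : Fin n → Fin m,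
        ((Equiv.arrowCongr σ (Equiv.refl (Fin m))).trans
          (Equiv.piCongrRight fun j => π (σ.symm j))) z
        = fun j => π (σ.symm j) (z (σ.symm j)) := by
      intro z; funext j; simp [Equiv.arrowCongr]
    rw [this x, this y, h1, h2]

@[simp] lemma autOf_apply (π : Fin n → Equiv.Perm (Fin m)) (σ : Equiv.Perm (Fin n))
    (x : Fin n → Fin m) (j : Fin n) :
    autOf π σ x j = π (σ.symm j) (x (σ.symm j)) := by
  show ((Equiv.arrowCongr σ (Equiv.refl (Fin m))).trans
      (Equiv.piCongrRight fun j => π (σ.symm j))) x j = _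
  simp [Equiv.arrowCongr]

end HammingAutAux

namespace HammingAutAux

lemma autOf_injective (n m : ℕ) :
    Function.Injective (fun p : (Fin n → Equiv.Perm (Fin (m + 3))) × Equiv.Perm (Fin n) =>
      autOf p.1 p.2) := by
  rintro ⟨π, σ⟩ ⟨π', σ'⟩ hEq
  have h : ∀ (x : Fin n → Fin (m + 3)) (j : Fin n),
      π (σ.symm j) (x (σ.symm j)) = π' (σ'.symm j) (x (σ'.symm j)) := by
    intro x j
    have := DFunLike.congr_fun hEq x
    have := congrFun this j
    simpa using this
  have hconst : ∀ (a : Fin (m + 3)) (j : Fin n), π (σ.symm j) a = π' (σ'.symm j) a :=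
    fun a j => h (fun _ => a) j
  have hσ : σ.symm = σ'.symm := by
    apply Equiv.ext
    intro j
    by_contra hne
    have hx := h (update 0 (σ.symm j) 1) j
    rw [update_self, update_of_ne (Ne.symm hne)] at hx
    have h0 : (0 : Fin n → Fin (m + 3)) (σ'.symm j) = 0 := rfl
    rw [h0, ← hconst 0 j] at hx
    have := (π (σ.symm j)).injective hx
    exact one_ne_zero this
  have hσσ : σ = σ' := by
    rw [← Equiv.symm_symm σ, ← Equiv.symm_symm σ', hσ]
  subst hσσ
  have hπ : π = π' := by
    funext i
    apply Equiv.ext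
    intro a
    have := hconst a (σ i)
    rwa [Equiv.symm_apply_apply] at this
  rw [hπ]

end HammingAutAux

namespace HammingAutAux

lemma autOf_surjective (n m : ℕ) (f : hammingGraph n (m + 3) ≃g hammingGraph n (m + 3)) :
    ∃ (π : Fin n → Equiv.Perm (Fin (m + 3))) (σ : Equiv.Perm (Fin n)), autOf π σ = f := by
  classical
  have hE0 : ∀ i : Fin n, update (0 : Fin n → Fin (m + 3)) i 0 = 0 := by
    intro i; funext j
    rcases eq_or_ne j i with rfl | h
    · simp [update_self]
    · simp [update_of_ne h]
  have hadjE : ∀ (i : Fin n) (a : Fin (m + 3)), a ≠ 0 →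
      (hammingGraph n (m + 3)).Adj (update 0 i a) 0 := by
    intro i a ha
    exact (adj_update (w := (0 : Fin n → Fin (m + 3))) (p := i) (a := a) (Ne.symm ha)).symm
  have key : ∀ i : Fin n, ∃ k : Fin n, ∀ a : Fin (m + 3), a ≠ 0 →
      f (update 0 i a) k ≠ f 0 k ∧ ∀ j, j ≠ k → f (update 0 i a) j = f 0 j := by
    intro i
    have hadj1 : (hammingGraph n (m + 3)).Adj (f (update 0 i 1)) (f 0) :=
      f.map_rel_iff.mpr (hadjE i 1 one_ne_zero)
    obtain ⟨k, hk1, hk2⟩ := adj_iff.mp hadj1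
    refine ⟨k, fun a ha => ?_⟩
    rcases eq_or_ne a 1 with rfl | ha1
    · exact ⟨hk1, hk2⟩
    · have hadja : (hammingGraph n (m + 3)).Adj (f (update 0 i a)) (f 0) :=
        f.map_rel_iff.mpr (hadjE i a ha)
      obtain ⟨l, hl1, hl2⟩ := adj_iff.mp hadja
      have hlk : l = k := by
        by_contra hlk
        have hadj2 : (hammingGraph n (m + 3)).Adj (f (update 0 i a)) (f (update 0 i 1)) := by
          apply f.map_rel_iff.mpr
          have heq : update (0 : Fin n → Fin (m + 3)) i 1 = update (update (0 : Fin n → Fin (m + 3)) i a) i 1 := by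
            rw [update_idem]
          rw [heq]
          exact adj_update (by rw [update_self]; exact ha1)
        obtain ⟨t, ht1, ht2⟩ := adj_iff.mp hadj2
        have d1 : f (update 0 i a) l ≠ f (update 0 i 1) l := by
          rw [hk2 l hlk]; exact hl1
        have d2 : f (update 0 i a) k ≠ f (update 0 i 1) k := by
          rw [hl2 k (Ne.symm hlk)]; exact fun h => hk1 h.symm
        have htl : t = l := by by_contra h'; exact d1 (ht2 l (Ne.symm h'))
        have htk : t = k := by by_contra h'; exact d2 (ht2 k (Ne.symm h'))
        exact hlk (htl.symm.trans htk)
      subst hlk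
      exact ⟨hl1, hl2⟩
  choose σ₀ hσ₀ using key
  have hinj : Function.Injective σ₀ := by
    intro i i' hii'
    by_contra hne
    have h1 := hσ₀ i 1 one_ne_zero
    have h2 := hσ₀ i' 1 one_ne_zero
    have hEne : update (0 : Fin n → Fin (m + 3)) i 1 ≠ update (0 : Fin n → Fin (m + 3)) i' 1 := by
      intro h
      have h' := congrFun h i
      rw [update_self, update_of_ne hne] at h'
      exact one_ne_zero h'
    have hfadj : (hammingGraph n (m + 3)).Adj (f (update 0 i 1)) (f (update 0 i' 1)) := by
      apply adj_of_ne_of_agree (σ₀ i) (f.injective.ne hEne)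
      intro j hj
      rw [h1.2 j hj, h2.2 j (by rw [← hii']; exact hj)]
    have hadj : (hammingGraph n (m + 3)).Adj (update (0 : Fin n → Fin (m + 3)) i 1)
        (update 0 i' 1) := f.map_rel_iff.mp hfadj
    obtain ⟨k, hk1, hk2⟩ := adj_iff.mp hadj
    have di : update (0 : Fin n → Fin (m + 3)) i 1 i ≠ update (0 : Fin n → Fin (m + 3)) i' 1 i := by
      rw [update_self, update_of_ne hne]; exact one_ne_zero
    have di' : update (0 : Fin n → Fin (m + 3)) i 1 i' ≠ update (0 : Fin n → Fin (m + 3)) i' 1 i' := by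
      rw [update_of_ne (Ne.symm hne), update_self]
      exact fun h => one_ne_zero h.symm
    have hki : k = i := by by_contra h'; exact di (hk2 i (Ne.symm h'))
    have hki' : k = i' := by by_contra h'; exact di' (hk2 i' (Ne.symm h'))
    exact hne (hki.symm.trans hki')
  have hbij : Function.Bijective σ₀ := Finite.injective_iff_bijective.mp hinj
  let σ : Equiv.Perm (Fin n) := Equiv.ofBijective σ₀ hbij
  have hπinj : ∀ i, Function.Injective
      (fun a : Fin (m + 3) => f (update 0 i a) (σ₀ i)) := by
    intro i a b hab
    by_contra hne
    simp only at hab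
    rcases eq_or_ne a 0 with rfl | ha
    · have hb : b ≠ 0 := fun h => hne (h ▸ rfl)
      rw [hE0 i] at hab
      exact (hσ₀ i b hb).1 hab.symm
    · rcases eq_or_ne b 0 with rfl | hb
      · rw [hE0 i] at hab
        exact (hσ₀ i a ha).1 hab
      · have hadj : (hammingGraph n (m + 3)).Adj (update (0 : Fin n → Fin (m + 3)) i a)
            (update 0 i b) := by
          have heq : update (0 : Fin n → Fin (m + 3)) i b = update (update (0 : Fin n → Fin (m + 3)) i a) i b := by
            rw [update_idem]
          rw [heq]
          exact adj_update (by rw [update_self]; exact hne)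
        have hfadj := f.map_rel_iff.mpr hadj
        obtain ⟨t, ht1, ht2⟩ := adj_iff.mp hfadj
        have htσ : t = σ₀ i := by
          by_contra h'
          exact ht1 (((hσ₀ i a ha).2 t h').trans ((hσ₀ i b hb).2 t h').symm)
        rw [htσ] at ht1
        exact ht1 hab
  let π : Fin n → Equiv.Perm (Fin (m + 3)) :=
    fun i => Equiv.ofBijective _ (Finite.injective_iff_bijective.mp (hπinj i))
  have hg : ∀ (x : Fin n → Fin (m + 3)) (i : Fin n),
      autOf π σ x (σ₀ i) = f (update 0 i (x i)) (σ₀ i) := by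
    intro x i
    rw [autOf_apply]
    have h1 : σ.symm (σ₀ i) = i := by
      have : σ₀ i = σ i := rfl
      rw [this, Equiv.symm_apply_apply]
    rw [h1]
    rfl
  have hσ₀surj : Function.Surjective σ₀ := hbij.2
  have main : ∀ (N : ℕ) (x : Fin n → Fin (m + 3)), hammingNorm x ≤ N → autOf π σ x = f x := by
    intro N
    induction N with
    | zero =>
      intro x hx
      have hx0 : x = 0 := hammingNorm_eq_zero.mp (Nat.le_zero.mp hx)
      subst hx0
      funext j
      obtain ⟨i, rfl⟩ := hσ₀surj j
      rw [hg 0 i]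
      show f (update 0 i 0) (σ₀ i) = f 0 (σ₀ i)
      rw [hE0 i]
    | succ N ih =>
      intro x hx
      rcases Nat.lt_or_ge (hammingNorm x) (N + 1) with hlt | hge
      · exact ih x (by omega)
      have hxN : hammingNorm x = N + 1 := le_antisymm hx hge
      rcases Nat.lt_or_ge N 1 with hN1 | hN2
      · -- hamming norm 1
        have hN0 : N = 0 := by omega
        subst hN0
        rw [hammingNorm] at hxN
        obtain ⟨p, hp⟩ := Finset.card_eq_one.mp hxN
        have hxp : x p ≠ 0 := by
          have hmem : p ∈ ({p} : Finset (Fin n)) := Finset.mem_singleton_self p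
          rw [← hp] at hmem; simpa using hmem
        have hxup : x = update (0 : Fin n → Fin (m + 3)) p (x p) := by
          funext j
          rcases eq_or_ne j p with rfl | hj
          · rw [update_self]
          · rw [update_of_ne hj]
            by_contra h
            have hmem : j ∈ ({p} : Finset (Fin n)) := by rw [← hp]; simpa using h
            exact hj (Finset.mem_singleton.mp hmem)
        funext j
        obtain ⟨i, rfl⟩ := hσ₀surj j
        rw [hg x i]
        rcases eq_or_ne i p with rfl | hip
        · rw [← hxup]
        · have hxi : x i = 0 := by
            by_contra h
            have hmem : i ∈ ({p} : Finset (Fin n)) := by rw [← hp]; simpa using h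
            exact hip (Finset.mem_singleton.mp hmem)
          rw [hxi, hE0 i]
          rw [hxup]
          exact ((hσ₀ p (x p) hxp).2 (σ₀ i) (fun h => hip (hinj h))).symm
      · -- hamming norm ≥ 2
        have h2 : 1 < hammingNorm x := by omega
        rw [hammingNorm] at h2
        obtain ⟨p, hpmem, q, hqmem, hpq⟩ := Finset.one_lt_card.mp h2
        simp only [Finset.mem_filter, Finset.mem_univ, true_and] at hpmem hqmem
        have hnormdec : ∀ (w : Fin n → Fin (m + 3)) r, w r ≠ 0 →
            hammingNorm (update w r 0) < hammingNorm w := by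
          intro w r hr
          rw [hammingNorm, hammingNorm]
          have hsub : Finset.filter (fun j => update w r 0 j ≠ 0) Finset.univ ⊆
              Finset.filter (fun j => w j ≠ 0) (Finset.univ : Finset (Fin n)) := by
            intro j hj
            simp only [Finset.mem_filter, Finset.mem_univ, true_and] at hj ⊢
            rcases eq_or_ne j r with rfl | h
            · rw [update_self] at hj; exact absurd rfl hj
            · rwa [update_of_ne h] at hj
          exact Finset.card_lt_card ((Finset.ssubset_iff_of_subset hsub).mpr
            ⟨r, by simpa using hr, by simp⟩)
        have hyq : update x p 0 q ≠ 0 := by rwa [update_of_ne (Ne.symm hpq)]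
        have hyN : hammingNorm (update x p 0) ≤ N := by
          have := hnormdec x p hpmem; omega
        have hzN : hammingNorm (update x q 0) ≤ N := by
          have := hnormdec x q hqmem; omega
        have huN : hammingNorm (update (update x p 0) q 0) ≤ N := by
          have h1 := hnormdec (update x p 0) q hyq
          have h2 := hnormdec x p hpmem
          omega
        have ihy := ih _ hyN
        have ihz := ih _ hzN
        have ihu := ih _ huN
        have haxy : (hammingGraph n (m + 3)).Adj x (update x p 0) := adj_update hpmem
        have haxz : (hammingGraph n (m + 3)).Adj x (update x q 0) := adj_update hqmem
        have hayu : (hammingGraph n (m + 3)).Adj (update x p 0)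
            (update (update x p 0) q 0) := adj_update hyq
        have hzu : update (update x p 0) q 0 = update (update x q 0) p 0 :=
          update_comm hpq 0 0 x
        have hzp : update x q 0 p ≠ 0 := by rwa [update_of_ne hpq]
        have hazu : (hammingGraph n (m + 3)).Adj (update x q 0)
            (update (update x p 0) q 0) := by rw [hzu]; exact adj_update hzp
        have hyzne : update x p 0 ≠ update x q 0 := by
          intro h
          have h' := congrFun h q
          rw [update_of_ne (Ne.symm hpq), update_self] at h'
          exact hqmem h'
        have hyznadj : ¬ (hammingGraph n (m + 3)).Adj (update x p 0) (update x q 0) := by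
          apply not_adj_two hpq
          · rw [update_self, update_of_ne hpq]; exact fun h => hpmem h.symm
          · rw [update_of_ne (Ne.symm hpq), update_self]; exact hqmem
        have hxune : x ≠ update (update x p 0) q 0 := by
          intro h
          have h' := congrFun h p
          rw [update_of_ne hpq, update_self] at h'
          exact hpmem h'
        have hfyz : f (update x p 0) ≠ f (update x q 0) := f.injective.ne hyzne
        have hfyznadj : ¬ (hammingGraph n (m + 3)).Adj (f (update x p 0)) (f (update x q 0)) :=
          fun h => hyznadj (f.map_rel_iff.mp h)
        have c1y := f.map_rel_iff.mpr haxy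
        have c1z := f.map_rel_iff.mpr haxz
        have c3y := f.map_rel_iff.mpr hayu.symm
        have c3z := f.map_rel_iff.mpr hazu.symm
        have c2y : (hammingGraph n (m + 3)).Adj (autOf π σ x) (f (update x p 0)) := by
          rw [← ihy]; exact (autOf π σ).map_rel_iff.mpr haxy
        have c2z : (hammingGraph n (m + 3)).Adj (autOf π σ x) (f (update x q 0)) := by
          rw [← ihz]; exact (autOf π σ).map_rel_iff.mpr haxz
        rcases three_common hfyz hfyznadj c1y c1z c2y c2z c3y c3z with h | h | h
        · exact h.symm
        · exact absurd (f.injective h) hxune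
        · rw [← ihu] at h
          exact absurd ((autOf π σ).injective h) hxune
  exact ⟨π, σ, RelIso.ext fun x => main (hammingNorm x) x le_rfl⟩

end HammingAutAux

/-- For `n ≥ 2`, `m ≥ 3`, the automorphism group of `H(n,m)` has order
exactly `(m!)^n * n!`. -/
theorem hammingGraph_aut_card (n m : ℕ) (hn : 2 ≤ n) (hm : 3 ≤ m) :
    Nat.card (hammingGraph n m ≃g hammingGraph n m) =
      (Nat.factorial m) ^ n * Nat.factorial n := by
  obtain ⟨m, rfl⟩ : ∃ k, m = k + 3 := ⟨m - 3, by omega⟩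
  have hbij : Function.Bijective
      (fun p : (Fin n → Equiv.Perm (Fin (m + 3))) × Equiv.Perm (Fin n) =>
        HammingAutAux.autOf p.1 p.2) := by
    refine ⟨HammingAutAux.autOf_injective n m, fun f => ?_⟩
    obtain ⟨π, σ, h⟩ := HammingAutAux.autOf_surjective n m f
    exact ⟨(π, σ), h⟩
  rw [← Nat.card_eq_of_bijective _ hbij, Nat.card_eq_fintype_card]
  simp [Fintype.card_prod, Fintype.card_fun, Fintype.card_perm, Fintype.card_fin]
end
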